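/- The optimal soft Q-function is the evaluation of its greedy pair (Theorems 1 and 2 combined, sequential form): let Q* be the unique fixed point of the soft Bellman operator 𝒯, and let π*(s,b,a) = exp(Q*(s,a,b)/α)/∑_{a'} exp(Q*(s,a',b)/α) and ρ*(s,b) = P(s,b)·(∑_a exp(Q*(s,a,b)/α))^α / ∑_{b'} P(s,b')·(∑_a exp(Q*(s,a,b')/α))^α. Then Q* is also the unique fixed point of the policy-evaluation operator 𝒯_{π*,ρ*}; equivalently, Q*(s,a,b) = R(s,a,b) + γ·∑_{s'} p(s,a,b,s')·( ∑_{b'} ρ*(s',b')·( ∑_{a'} π*(s',b',a')·(Q*(s',a',b') − α·log π*(s',b',a')) ) − ∑_{b'} ρ*(s',b')·log(ρ*(s',b')/P(s',b')) ) for all (s,a,b). -/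

import Mathlib

/-- The soft Bellman operator
(𝒯Q)(s,a,b) = R(s,a,b) + γ·∑_{s'} p(s,a,b,s')·log ∑_{b'} P(s',b')·(∑_{a'} exp(Q(s',a',b')/α))^α. -/
noncomputable def softBellman {S A B : Type*} [Fintype S] [Fintype A] [Fintype B]
    (α γ : ℝ) (R : S × A × B → ℝ) (p : S → A → B → S → ℝ) (P : S → B → ℝ)
    (Q : S × A × B → ℝ) : S × A × B → ℝ :=
  fun x => R x + γ * ∑ s', p x.1 x.2.1 x.2.2 s' *
    Real.log (∑ b', P s' b' * (∑ a', Real.exp (Q (s', a', b') / α)) ^ α)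

/-- The policy-evaluation operator
(𝒯_{π,ρ}Q)(s,a,b) = R(s,a,b) + γ·∑_{s'} p(s,a,b,s')·( ∑_{b'} ρ(s',b')·( ∑_{a'}
π(s',b',a')·(Q(s',a',b') − α·log π(s',b',a')) ) − ∑_{b'} ρ(s',b')·log(ρ(s',b')/P(s',b')) ). -/
noncomputable def evalOp {S A B : Type*} [Fintype S] [Fintype A] [Fintype B]
    (α γ : ℝ) (R : S × A × B → ℝ) (p : S → A → B → S → ℝ) (P : S → B → ℝ)
    (π : S → B → A → ℝ) (ρ : S → B → ℝ)
    (Q : S × A × B → ℝ) : S × A × B → ℝ :=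
  fun x => R x + γ * ∑ s', p x.1 x.2.1 x.2.2 s' *
    ((∑ b', ρ s' b' *
        (∑ a', π s' b' a' * (Q (s', a', b') - α * Real.log (π s' b' a'))))
      - ∑ b', ρ s' b' * Real.log (ρ s' b' / P s' b'))

/-- The greedy conditional policy π_Q(s,b,a) = exp(Q(s,a,b)/α)/∑_{a'} exp(Q(s,a',b)/α). -/
noncomputable def greedyPolicy {S A B : Type*} [Fintype A]
    (α : ℝ) (Q : S × A × B → ℝ) : S → B → A → ℝ :=
  fun s b a => Real.exp (Q (s, a, b) / α) / ∑ a', Real.exp (Q (s, a', b) / α)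

/-- The greedy opponent model
ρ_Q(s,b) = P(s,b)·(∑_a exp(Q(s,a,b)/α))^α / ∑_{b'} P(s,b')·(∑_a exp(Q(s,a,b')/α))^α. -/
noncomputable def greedyOpponent {S A B : Type*} [Fintype A] [Fintype B]
    (α : ℝ) (P : S → B → ℝ) (Q : S × A × B → ℝ) : S → B → ℝ :=
  fun s b => P s b * (∑ a, Real.exp (Q (s, a, b) / α)) ^ α
    / ∑ b', P s b' * (∑ a, Real.exp (Q (s, a, b') / α)) ^ α

/-- The optimal soft Q-function is the evaluation of its greedy pair:
if Q* is the (unique) fixed point of the soft Bellman operator 𝒯, then Q* is also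
the unique fixed point of the policy-evaluation operator 𝒯_{π*,ρ*} for the greedy
pair π*, ρ* of Q*; equivalently Q* satisfies the displayed fixed-point equation. -/
theorem optimal_Q_is_evaluation_of_greedy_pair
    {S A B : Type*} [Fintype S] [Fintype A] [Fintype B]
    [Nonempty S] [Nonempty A] [Nonempty B]
    (α γ : ℝ) (hα : 0 < α) (hγ₀ : 0 ≤ γ) (hγ₁ : γ < 1)
    (R : S × A × B → ℝ)
    (p : S → A → B → S → ℝ)
    (hp_nonneg : ∀ s a b s', 0 ≤ p s a b s') (hp_sum : ∀ s a b, ∑ s', p s a b s' = 1)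
    (P : S → B → ℝ) (hP_pos : ∀ s b, 0 < P s b) (hP_sum : ∀ s, ∑ b, P s b = 1)
    (Qstar : S × A × B → ℝ)
    (hQstar : softBellman α γ R p P Qstar = Qstar) :
    evalOp α γ R p P (greedyPolicy α Qstar) (greedyOpponent α P Qstar) Qstar = Qstar
    ∧ (∀ Q : S × A × B → ℝ,
        evalOp α γ R p P (greedyPolicy α Qstar) (greedyOpponent α P Qstar) Q = Q
          → Q = Qstar) := by
  classical
  set π := greedyPolicy α Qstar with hπdef
  set ρ := greedyOpponent α P Qstar with hρdef
  have hα' : α ≠ 0 := ne_of_gt hα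
  have hE : ∀ s b, 0 < ∑ a, Real.exp (Qstar (s, a, b) / α) := fun s b =>
    Finset.sum_pos (fun a _ => Real.exp_pos _) Finset.univ_nonempty
  have hZ : ∀ s, 0 < ∑ b, P s b * (∑ a, Real.exp (Qstar (s, a, b) / α)) ^ α := fun s =>
    Finset.sum_pos (fun b _ => mul_pos (hP_pos s b) (Real.rpow_pos_of_pos (hE s b) α))
      Finset.univ_nonempty
  have hπpos : ∀ s b a, 0 < π s b a := fun s b a => div_pos (Real.exp_pos _) (hE s b)
  have hπsum : ∀ s b, ∑ a, π s b a = 1 := by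
    intro s b
    simp only [hπdef, greedyPolicy]
    rw [← Finset.sum_div, div_self (ne_of_gt (hE s b))]
  have hρpos : ∀ s b, 0 < ρ s b := fun s b =>
    div_pos (mul_pos (hP_pos s b) (Real.rpow_pos_of_pos (hE s b) α)) (hZ s)
  have hρsum : ∀ s, ∑ b, ρ s b = 1 := by
    intro s
    simp only [hρdef, greedyOpponent]
    rw [← Finset.sum_div, div_self (ne_of_gt (hZ s))]
  -- key inner identity: ∑_a π (Q* − α log π) = α log E
  have hinner : ∀ s b, (∑ a, π s b a * (Qstar (s, a, b) - α * Real.log (π s b a)))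
      = α * Real.log (∑ a, Real.exp (Qstar (s, a, b) / α)) := by
    intro s b
    have hterm : ∀ a, Qstar (s, a, b) - α * Real.log (π s b a)
        = α * Real.log (∑ a', Real.exp (Qstar (s, a', b) / α)) := by
      intro a
      have hlog : Real.log (π s b a)
          = Qstar (s, a, b) / α - Real.log (∑ a', Real.exp (Qstar (s, a', b) / α)) := by
        simp only [hπdef, greedyPolicy]
        rw [Real.log_div (Real.exp_ne_zero _) (ne_of_gt (hE s b)), Real.log_exp]
      rw [hlog]
      field_simp
      ring
    simp_rw [hterm]
    rw [← Finset.sum_mul, hπsum, one_mul]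
  -- bracket identity: the evaluation bracket equals the Bellman log
  have hbracket : ∀ s,
      ((∑ b, ρ s b * (∑ a, π s b a * (Qstar (s, a, b) - α * Real.log (π s b a))))
        - ∑ b, ρ s b * Real.log (ρ s b / P s b))
      = Real.log (∑ b, P s b * (∑ a, Real.exp (Qstar (s, a, b) / α)) ^ α) := by
    intro s
    have hKL : ∀ b, Real.log (ρ s b / P s b)
        = α * Real.log (∑ a, Real.exp (Qstar (s, a, b) / α))
          - Real.log (∑ b', P s b' * (∑ a, Real.exp (Qstar (s, a, b') / α)) ^ α) := by
      intro b
      have hq : ρ s b / P s b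
          = (∑ a, Real.exp (Qstar (s, a, b) / α)) ^ α
            / ∑ b', P s b' * (∑ a, Real.exp (Qstar (s, a, b') / α)) ^ α := by
        simp only [hρdef, greedyOpponent]
        rw [div_div, mul_comm (∑ b', P s b' * (∑ a, Real.exp (Qstar (s, a, b') / α)) ^ α) (P s b),
          ← div_div, mul_div_cancel_left₀ _ (ne_of_gt (hP_pos s b))]
      rw [hq, Real.log_div (ne_of_gt (Real.rpow_pos_of_pos (hE s b) α)) (ne_of_gt (hZ s)),
        Real.log_rpow (hE s b)]
    simp_rw [hinner, hKL]
    rw [← Finset.sum_sub_distrib]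
    have : ∀ b ∈ Finset.univ,
        ρ s b * (α * Real.log (∑ a, Real.exp (Qstar (s, a, b) / α)))
          - ρ s b * (α * Real.log (∑ a, Real.exp (Qstar (s, a, b) / α))
            - Real.log (∑ b', P s b' * (∑ a, Real.exp (Qstar (s, a, b') / α)) ^ α))
        = ρ s b * Real.log (∑ b', P s b' * (∑ a, Real.exp (Qstar (s, a, b') / α)) ^ α) := by
      intro b _; ring
    rw [Finset.sum_congr rfl this, ← Finset.sum_mul, hρsum, one_mul]
  -- Part 1
  have part1 : evalOp α γ R p P π ρ Qstar = Qstar := by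
    funext x
    conv_rhs => rw [← hQstar]
    simp only [evalOp, softBellman]
    congr 2
    exact Finset.sum_congr rfl fun s' _ => by rw [hbracket s']
  refine ⟨part1, ?_⟩
  -- Part 2 : uniqueness
  intro Q hQ
  set D : S × A × B → ℝ := fun x => Q x - Qstar x with hD
  have hdiff : ∀ x : S × A × B, D x = γ * ∑ s', p x.1 x.2.1 x.2.2 s' *
      (∑ b', ρ s' b' * ∑ a', π s' b' a' * D (s', a', b')) := by
    intro x
    have h1 : D x = evalOp α γ R p P π ρ Q x - evalOp α γ R p P π ρ Qstar x := by
      rw [hQ, part1]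
    rw [h1]
    simp only [evalOp]
    rw [show ∀ r u v : ℝ, (r + γ * u) - (r + γ * v) = γ * (u - v) from fun r u v => by ring,
      ← Finset.sum_sub_distrib]
    congr 1
    refine Finset.sum_congr rfl fun s' _ => ?_
    rw [← mul_sub]
    congr 1
    rw [sub_sub_sub_cancel_right, ← Finset.sum_sub_distrib]
    refine Finset.sum_congr rfl fun b _ => ?_
    rw [← mul_sub, ← Finset.sum_sub_distrib]
    congr 1
    refine Finset.sum_congr rfl fun a _ => ?_
    ring
  obtain ⟨x0, -, hx0⟩ := Finset.exists_max_image (Finset.univ : Finset (S × A × B))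
    (fun x => |D x|) Finset.univ_nonempty
  set M := |D x0| with hM
  have hbd : ∀ x, |D x| ≤ M := fun x => hx0 x (Finset.mem_univ x)
  have key : ∀ x : S × A × B, |D x| ≤ γ * M := by
    intro x
    rw [hdiff x, abs_mul, abs_of_nonneg hγ₀]
    refine mul_le_mul_of_nonneg_left ?_ hγ₀
    have hg : ∀ s', |∑ b', ρ s' b' * ∑ a', π s' b' a' * D (s', a', b')| ≤ M := by
      intro s'
      calc |∑ b', ρ s' b' * ∑ a', π s' b' a' * D (s', a', b')|
          ≤ ∑ b', |ρ s' b' * ∑ a', π s' b' a' * D (s', a', b')| :=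
            Finset.abs_sum_le_sum_abs _ _
        _ ≤ ∑ b', ρ s' b' * M := by
            refine Finset.sum_le_sum fun b _ => ?_
            rw [abs_mul, abs_of_pos (hρpos s' b)]
            refine mul_le_mul_of_nonneg_left ?_ (le_of_lt (hρpos s' b))
            calc |∑ a', π s' b a' * D (s', a', b)|
                ≤ ∑ a', |π s' b a' * D (s', a', b)| := Finset.abs_sum_le_sum_abs _ _
              _ ≤ ∑ a', π s' b a' * M := by
                  refine Finset.sum_le_sum fun a _ => ?_
                  rw [abs_mul, abs_of_pos (hπpos s' b a)]
                  exact mul_le_mul_of_nonneg_left (hbd _) (le_of_lt (hπpos s' b a))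
              _ = M := by rw [← Finset.sum_mul, hπsum, one_mul]
        _ = M := by rw [← Finset.sum_mul, hρsum, one_mul]
    calc |∑ s', p x.1 x.2.1 x.2.2 s' * (∑ b', ρ s' b' * ∑ a', π s' b' a' * D (s', a', b'))|
        ≤ ∑ s', |p x.1 x.2.1 x.2.2 s' * (∑ b', ρ s' b' * ∑ a', π s' b' a' * D (s', a', b'))| :=
          Finset.abs_sum_le_sum_abs _ _
      _ ≤ ∑ s', p x.1 x.2.1 x.2.2 s' * M := by
          refine Finset.sum_le_sum fun s' _ => ?_
          rw [abs_mul, abs_of_nonneg (hp_nonneg _ _ _ s')]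
          exact mul_le_mul_of_nonneg_left (hg s') (hp_nonneg _ _ _ s')
      _ = M := by rw [← Finset.sum_mul, hp_sum, one_mul]
  have hMle : M ≤ γ * M := key x0
  have hM0 : 0 ≤ M := abs_nonneg _
  have hMzero : M = 0 := by nlinarith
  funext x
  have := hbd x
  rw [hMzero] at this
  have hx : D x = 0 := abs_nonpos_iff.mp this
  exact sub_eq_zero.mp hx
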